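/- arXiv:cs/0702053 — 2 statements merged into one kernel-verified Lean document; each statement's English description precedes it below -/
import Mathlib

section
/- If DFAs D and D' (over the same alphabet, with all states reachable) recognize finitely different languages, then S(D) = S(D'), where S(D) is the set of finite-difference equivalence classes of the languages induced by the states of D. -/
open Set

/-- Symmetric difference of two languages, as a set of words. -/
def symmDiffL {α : Type} (L L' : Language α) : Set (List α) :=
  {w | (w ∈ L ∧ w ∉ L') ∨ (w ∈ L' ∧ w ∉ L)}

/-- Two languages are finitely different if their symmetric difference is finite. -/
def FinDiff {α : Type} (L L' : Language α) : Prop := (symmDiffL L L').Finite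

/-- The set of words that drive the DFA from its start state to state `q`. -/
def DFA.reachedBy {α σ : Type} (D : DFA α σ) (q : σ) : Set (List α) :=
  {w | D.eval w = q}

/-- The infinite part of a DFA: states reached by infinitely many words. -/
def DFA.infinitePart {α σ : Type} (D : DFA α σ) : Set σ :=
  {q | (D.reachedBy q).Infinite}

/-- The finite part of a DFA: states reached by only finitely many words. -/
def DFA.finitePart {α σ : Type} (D : DFA α σ) : Set σ :=
  {q | (D.reachedBy q).Finite}

/-- The language induced by state `q` of DFA `D`. -/
def DFA.langOf {α σ : Type} (D : DFA α σ) (q : σ) : Language α :=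
  {w | D.evalFrom q w ∈ D.accept}

/-- A DFA is minimized if all states are reachable and distinct states
induce distinct languages. -/
def DFA.Minimized {α σ : Type} (D : DFA α σ) : Prop :=
  (∀ q, ∃ w, D.eval w = q) ∧ ∀ p q : σ, D.langOf p = D.langOf q → p = q

/-- Two DFAs have isomorphic infinite parts. -/
def InfIso {α σ σ' : Type} (D : DFA α σ) (D' : DFA α σ') : Prop :=
  ∃ f : σ → σ', Set.BijOn f D.infinitePart D'.infinitePart ∧
    (∀ q ∈ D.infinitePart, q ∈ D.accept ↔ f q ∈ D'.accept) ∧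
    (∀ q ∈ D.infinitePart, ∀ c : α, f (D.step q c) = D'.step (f q) c)

/-- `S(D)`: the set of finite-difference classes of languages induced by states of `D`,
each class represented as the set of languages finitely different from the inducing one. -/
def SClasses {α σ : Type} (D : DFA α σ) : Set (Set (Language α)) :=
  {C | ∃ q : σ, C = {L | FinDiff (D.langOf q) L}}

/-- A DFA is f-minimal if no DFA recognizing a finitely different language has
fewer states. -/
def FMinimal {α σ : Type} [Fintype σ] (D : DFA α σ) : Prop :=
  ∀ (σ' : Type) (_ : Fintype σ') (D' : DFA α σ'),
    FinDiff D.accepts D'.accepts → Fintype.card σ ≤ Fintype.card σ'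

lemma finDiff_symm {α : Type} {L L' : Language α} (h : FinDiff L L') : FinDiff L' L := by
  apply Set.Finite.subset h
  intro w hw
  rcases hw with ⟨a, b⟩ | ⟨a, b⟩
  · exact Or.inr ⟨a, b⟩
  · exact Or.inl ⟨a, b⟩

lemma finDiff_trans {α : Type} {L M N : Language α} (h1 : FinDiff L M) (h2 : FinDiff M N) :
    FinDiff L N := by
  apply Set.Finite.subset (h1.union h2)
  intro w hw
  by_cases hM : w ∈ M
  · rcases hw with ⟨a, b⟩ | ⟨a, b⟩
    · exact Or.inr (Or.inl ⟨hM, b⟩)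
    · exact Or.inl (Or.inr ⟨hM, b⟩)
  · rcases hw with ⟨a, b⟩ | ⟨a, b⟩
    · exact Or.inl (Or.inl ⟨a, hM⟩)
    · exact Or.inr (Or.inr ⟨a, hM⟩)

lemma finDiff_quot {α : Type} {L L' : Language α} (h : FinDiff L L') (w : List α) :
    FinDiff ({u | w ++ u ∈ L} : Language α) ({u | w ++ u ∈ L'} : Language α) := by
  have : symmDiffL ({u | w ++ u ∈ L} : Language α) ({u | w ++ u ∈ L'} : Language α)
      = (fun u => w ++ u) ⁻¹' (symmDiffL L L') := rfl
  unfold FinDiff; rw [this]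
  exact h.preimage (fun a _ b _ hab => List.append_cancel_left hab)

lemma langOf_eval {α σ : Type} (D : DFA α σ) (w : List α) :
    D.langOf (D.eval w) = {u | w ++ u ∈ D.accepts} := by
  ext u
  show D.evalFrom (D.eval w) u ∈ D.accept ↔ D.eval (w ++ u) ∈ D.accept
  rw [DFA.eval, DFA.evalFrom_of_append]

lemma finDiff_langOf {α σ σ' : Type} (D : DFA α σ) (D' : DFA α σ')
    (h : FinDiff D.accepts D'.accepts) (w : List α) :
    FinDiff (D.langOf (D.eval w)) (D'.langOf (D'.eval w)) := by
  rw [langOf_eval, langOf_eval]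
  exact finDiff_quot h w

lemma class_eq_of_finDiff {α : Type} {L L' : Language α} (h : FinDiff L L') :
    {M | FinDiff L M} = {M | FinDiff L' M} := by
  ext M
  exact ⟨fun hm => finDiff_trans (finDiff_symm h) hm, fun hm => finDiff_trans h hm⟩

/-- Finitely different DFAs have the same set of state-classes. -/
theorem sClasses_eq_of_finDiff {α σ σ' : Type} [Fintype σ] [Fintype σ']
    (D : DFA α σ) (D' : DFA α σ')
    (hreach : ∀ q : σ, ∃ w, D.eval w = q)
    (hreach' : ∀ q : σ', ∃ w, D'.eval w = q)
    (h : FinDiff D.accepts D'.accepts) :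
    SClasses D = SClasses D' := by
  ext C
  constructor
  · rintro ⟨q, rfl⟩
    obtain ⟨w, rfl⟩ := hreach q
    exact ⟨D'.eval w, class_eq_of_finDiff (finDiff_langOf D D' h w)⟩
  · rintro ⟨q, rfl⟩
    obtain ⟨w, rfl⟩ := hreach' q
    exact ⟨D.eval w, (class_eq_of_finDiff (finDiff_langOf D D' h w)).symm⟩
end

section
/- If D and D' are minimized DFAs with S(D) = S(D'), then D and D' have isomorphic infinite parts. -/
open Set

section Aux
variable {α σ σ' : Type}

lemma symmDiffL_comm (L L' : Language α) : symmDiffL L L' = symmDiffL L' L := by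
  ext w; simp only [symmDiffL, mem_setOf_eq]; tauto

lemma finDiff_refl (L : Language α) : FinDiff L L := by
  have h : symmDiffL L L = ∅ := by ext w; simp [symmDiffL]
  rw [FinDiff, h]; exact Set.finite_empty

lemma DFA.langOf_step (D : DFA α σ) (q : σ) (c : α) :
    D.langOf (D.step q c) = {x | c :: x ∈ D.langOf q} := rfl

lemma DFA.mem_accept_iff_nil (D : DFA α σ) (q : σ) :
    q ∈ D.accept ↔ ([] : List α) ∈ D.langOf q := Iff.rfl

lemma DFA.step_mem_infinitePart (D : DFA α σ) {q : σ} (hq : q ∈ D.infinitePart) (c : α) :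
    D.step q c ∈ D.infinitePart := by
  have himg : ((fun u : List α => u ++ [c]) '' D.reachedBy q) ⊆ D.reachedBy (D.step q c) := by
    rintro _ ⟨u, hu, rfl⟩
    simp only [DFA.reachedBy, mem_setOf_eq] at hu ⊢
    rw [DFA.eval_append_singleton, hu]
  have hinj : Function.Injective (fun u : List α => u ++ [c]) := fun a b hab => by
    simpa using hab
  exact ((hq.image hinj.injOn).mono himg)

lemma exists_infinite_fiber' [Fintype σ'] {s : Set (List α)} (hs : s.Infinite)
    (h : List α → σ') : ∃ q', {u ∈ s | h u = q'}.Infinite := by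
  by_contra hc
  push_neg at hc
  have hsub : s ⊆ ⋃ q' : σ', {u ∈ s | h u = q'} := fun u hu =>
    mem_iUnion.2 ⟨h u, hu, rfl⟩
  exact hs ((Set.finite_iUnion hc).subset hsub)

lemma exists_kernel_match [Fintype σ'] (A : DFA α σ) (B : DFA α σ')
    (q'0 : σ') (w0 : List α) (hw0 : B.eval w0 = q'0)
    (hfd : FinDiff (A.langOf A.start) (B.langOf q'0)) :
    ∀ q ∈ A.infinitePart, ∃ q', q' ∈ B.infinitePart ∧ B.langOf q' = A.langOf q := by
  intro q hq
  set Δ := symmDiffL (A.langOf A.start) (B.langOf q'0) with hΔdef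
  have hΔ : Δ.Finite := hfd
  have hP : {u : List α | ∃ w ∈ Δ, u <+: w}.Finite := by
    have he : {u : List α | ∃ w ∈ Δ, u <+: w} = ⋃ w ∈ Δ, {u | u <+: w} := by
      ext u; simp
    rw [he]
    refine hΔ.biUnion fun w _ => ?_
    refine (w.inits.finite_toSet).subset fun u hu => ?_
    simpa [List.mem_inits] using hu
  have hSP : ((A.reachedBy q) \ {u : List α | ∃ w ∈ Δ, u <+: w}).Infinite := hq.diff hP
  obtain ⟨q', hq'⟩ := exists_infinite_fiber' hSP (fun u => B.evalFrom q'0 u)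
  refine ⟨q', ?_, ?_⟩
  · have himg : ((fun u : List α => w0 ++ u) ''
        {u ∈ (A.reachedBy q) \ {u : List α | ∃ w ∈ Δ, u <+: w} | B.evalFrom q'0 u = q'})
        ⊆ B.reachedBy q' := by
      rintro _ ⟨u, hu, rfl⟩
      simp only [DFA.reachedBy, mem_setOf_eq]
      show B.evalFrom B.start (w0 ++ u) = q'
      rw [DFA.evalFrom_of_append]
      show B.evalFrom (B.eval w0) u = q'
      rw [hw0]
      exact hu.2
    have hinj : Function.Injective (fun u : List α => w0 ++ u) := fun a b hab => by
      simpa using hab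
    exact ((hq'.image hinj.injOn).mono himg)
  · obtain ⟨u, ⟨⟨huq, hup⟩, huq'⟩⟩ := hq'.nonempty
    have huq : A.eval u = q := huq
    ext x
    have h1 : (x ∈ A.langOf q) ↔ (u ++ x ∈ A.langOf A.start) := by
      show A.evalFrom q x ∈ A.accept ↔ A.evalFrom A.start (u ++ x) ∈ A.accept
      rw [DFA.evalFrom_of_append, show A.evalFrom A.start u = q from huq]
    have h2 : (x ∈ B.langOf q') ↔ (u ++ x ∈ B.langOf q'0) := by
      show B.evalFrom q' x ∈ B.accept ↔ B.evalFrom q'0 (u ++ x) ∈ B.accept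
      rw [DFA.evalFrom_of_append, show B.evalFrom q'0 u = q' from huq']
    have h3 : (u ++ x ∈ A.langOf A.start) ↔ (u ++ x ∈ B.langOf q'0) := by
      by_contra hcon
      have : u ++ x ∈ Δ := by
        rw [hΔdef]
        simp only [symmDiffL, mem_setOf_eq]
        tauto
      exact hup ⟨u ++ x, this, ⟨x, rfl⟩⟩
    rw [h2, ← h3, ← h1]

lemma exists_finDiff_start (D : DFA α σ) (D' : DFA α σ')
    (h : SClasses D = SClasses D') :
    ∃ q'0 : σ', FinDiff (D.langOf D.start) (D'.langOf q'0) := by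
  have h1 : {L | FinDiff (D.langOf D.start) L} ∈ SClasses D' := by
    rw [← h]; exact ⟨D.start, rfl⟩
  obtain ⟨q'0, hq'0⟩ := h1
  refine ⟨q'0, ?_⟩
  have hmem : D.langOf D.start ∈ {L | FinDiff (D.langOf D.start) L} := finDiff_refl _
  rw [hq'0] at hmem
  rw [FinDiff, symmDiffL_comm]
  exact hmem

end Aux

/-- Minimized DFAs with equal `S(D)` have isomorphic infinite parts. -/
theorem infIso_of_sClasses_eq {α σ σ' : Type} [Fintype σ] [Fintype σ']
    (D : DFA α σ) (D' : DFA α σ')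
    (hD : D.Minimized) (hD' : D'.Minimized)
    (h : SClasses D = SClasses D') :
    InfIso D D' := by
  obtain ⟨q'0, hfd⟩ := exists_finDiff_start D D' h
  obtain ⟨w0, hw0⟩ := hD'.1 q'0
  obtain ⟨q0, hfd'⟩ := exists_finDiff_start D' D h.symm
  obtain ⟨v0, hv0⟩ := hD.1 q0
  have hfex : ∀ q : σ, ∃ q' : σ',
      q ∈ D.infinitePart → q' ∈ D'.infinitePart ∧ D'.langOf q' = D.langOf q := by
    intro q
    by_cases hq : q ∈ D.infinitePart
    · obtain ⟨q', h1, h2⟩ := exists_kernel_match D D' q'0 w0 hw0 hfd q hq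
      exact ⟨q', fun _ => ⟨h1, h2⟩⟩
    · exact ⟨D'.start, fun hc => absurd hc hq⟩
  choose f hf using hfex
  have hgex : ∀ q' : σ', ∃ q : σ,
      q' ∈ D'.infinitePart → q ∈ D.infinitePart ∧ D.langOf q = D'.langOf q' := by
    intro q'
    by_cases hq : q' ∈ D'.infinitePart
    · obtain ⟨q, h1, h2⟩ := exists_kernel_match D' D q0 v0 hv0 hfd' q' hq
      exact ⟨q, fun _ => ⟨h1, h2⟩⟩
    · exact ⟨D.start, fun hc => absurd hc hq⟩
  choose g hg using hgex
  have hmapsf : MapsTo f D.infinitePart D'.infinitePart := fun q hq => (hf q hq).1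
  have hmapsg : MapsTo g D'.infinitePart D.infinitePart := fun q hq => (hg q hq).1
  have hinjf : InjOn f D.infinitePart := by
    intro a ha b hb hab
    apply hD.2
    rw [← (hf a ha).2, hab, (hf b hb).2]
  have hinjg : InjOn g D'.infinitePart := by
    intro a ha b hb hab
    apply hD'.2
    rw [← (hg a ha).2, hab, (hg b hb).2]
  have hsfin : D.infinitePart.Finite := Set.toFinite _
  have htfin : D'.infinitePart.Finite := Set.toFinite _
  have hc1 : D.infinitePart.ncard ≤ D'.infinitePart.ncard := by
    calc D.infinitePart.ncard = (f '' D.infinitePart).ncard :=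
          (Set.ncard_image_of_injOn hinjf).symm
      _ ≤ D'.infinitePart.ncard := Set.ncard_le_ncard (Set.mapsTo_iff_image_subset.1 hmapsf) htfin
  have hc2 : D'.infinitePart.ncard ≤ D.infinitePart.ncard := by
    calc D'.infinitePart.ncard = (g '' D'.infinitePart).ncard :=
          (Set.ncard_image_of_injOn hinjg).symm
      _ ≤ D.infinitePart.ncard := Set.ncard_le_ncard (Set.mapsTo_iff_image_subset.1 hmapsg) hsfin
  have himg : f '' D.infinitePart = D'.infinitePart := by
    apply Set.eq_of_subset_of_ncard_le (Set.mapsTo_iff_image_subset.1 hmapsf) _ htfin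
    rw [Set.ncard_image_of_injOn hinjf]
    omega
  have hsurj : SurjOn f D.infinitePart D'.infinitePart := by
    rw [Set.SurjOn, himg]
  refine ⟨f, ⟨hmapsf, hinjf, hsurj⟩, ?_, ?_⟩
  · intro q hq
    rw [DFA.mem_accept_iff_nil, DFA.mem_accept_iff_nil, (hf q hq).2]
  · intro q hq c
    apply hD'.2
    rw [(hf (D.step q c) (D.step_mem_infinitePart hq c)).2,
      DFA.langOf_step, DFA.langOf_step, (hf q hq).2]
end
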